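/- Let C ⊂ ℝ^d be a nonempty compact convex set with diameter δ_C and radius μ_C, let x ∈ ℝ^d, ε > 0, K ≥ 0, and choose λ ≥ (K + (1/2)δ_C² + μ_C δ_C)/ε. If p' ∈ C is a K-approximate projection of −λx onto C, i.e. (1/2)‖p' + λx‖² ≤ min_{c ∈ C} (1/2)‖c + λx‖² + K, then ⟨p', x⟩ ≤ min_{c ∈ C} ⟨c, x⟩ + ε; that is, p' is an ε-accurate linear minimization oracle output for x over C. -/

import Mathlib

open RealInnerProductSpace

/-- Corollary of Theorem 5.2: choosing `λ ≥ (K + δ_C²/2 + μ_C δ_C)/ε`, a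
`K`-approximate projection of `-λx` onto `C` is an `ε`-accurate LMO output
for `x` over `C`. -/
theorem kproj_gives_eps_lmo {d : ℕ}
    (C : Set (EuclideanSpace ℝ (Fin d)))
    (hCne : C.Nonempty) (hCcomp : IsCompact C) (hCconv : Convex ℝ C)
    (x : EuclideanSpace ℝ (Fin d)) (lam K ε : ℝ) (hε : 0 < ε) (hK : 0 ≤ K)
    (hlam : lam ≥ (K + (1 / 2) * (Metric.diam C) ^ 2
      + sSup ((fun c => ‖c‖) '' C) * Metric.diam C) / ε)
    (p' : EuclideanSpace ℝ (Fin d)) (hp' : p' ∈ C)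
    (hproj : (1 / 2) * ‖p' - (-(lam • x))‖ ^ 2 ≤
      sInf ((fun c => (1 / 2) * ‖c - (-(lam • x))‖ ^ 2) '' C) + K) :
    ⟪p', x⟫ ≤ sInf ((fun c => ⟪c, x⟫) '' C) + ε := by
  set μ := sSup ((fun c => ‖c‖) '' C) with hμdef
  set δ := Metric.diam C with hδdef
  have hδ0 : 0 ≤ δ := Metric.diam_nonneg
  have hbdd : Bornology.IsBounded C := hCcomp.isBounded
  have hμbdd : BddAbove ((fun c => ‖c‖) '' C) :=
    (hCcomp.image continuous_norm).bddAbove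
  have hnorm_le : ∀ c ∈ C, ‖c‖ ≤ μ := fun c hc => le_csSup hμbdd ⟨c, hc, rfl⟩
  have hμ0 : 0 ≤ μ := (norm_nonneg p').trans (hnorm_le p' hp')
  have hnum : 0 ≤ K + (1 / 2) * δ ^ 2 + μ * δ := by positivity
  have hlam0 : 0 ≤ lam := le_trans (div_nonneg hnum hε.le) hlam
  have hlamε : K + (1 / 2) * δ ^ 2 + μ * δ ≤ lam * ε := by
    have := (div_le_iff₀ hε).mp hlam
    linarith
  have key : ∀ c ∈ C, ⟪p', x⟫ ≤ ⟪c, x⟫ + ε := by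
    intro c hc
    have h1 : (1 / 2) * ‖p' - (-(lam • x))‖ ^ 2 ≤
        (1 / 2) * ‖c - (-(lam • x))‖ ^ 2 + K := by
      refine hproj.trans (add_le_add_left ?_ K)
      refine csInf_le ⟨0, ?_⟩ ⟨c, hc, rfl⟩
      rintro y ⟨a, _, rfl⟩
      positivity
    have e1 : ‖p' - (-(lam • x))‖ ^ 2
        = ‖p'‖ ^ 2 + 2 * (lam * ⟪p', x⟫) + ‖lam • x‖ ^ 2 := by
      rw [sub_neg_eq_add, norm_add_sq_real, real_inner_smul_right]
    have e2 : ‖c - (-(lam • x))‖ ^ 2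
        = ‖c‖ ^ 2 + 2 * (lam * ⟪c, x⟫) + ‖lam • x‖ ^ 2 := by
      rw [sub_neg_eq_add, norm_add_sq_real, real_inner_smul_right]
    have h2 : lam * ⟪p', x⟫ ≤ lam * ⟪c, x⟫ + K + (1 / 2) * (‖c‖ ^ 2 - ‖p'‖ ^ 2) := by
      rw [e1, e2] at h1; linarith
    have hdist : ‖c - p'‖ ≤ δ := by
      have := Metric.dist_le_diam_of_mem hbdd hc hp'
      rwa [dist_eq_norm] at this
    have hcp : ‖c‖ - ‖p'‖ ≤ δ := le_trans (by
      have := norm_sub_norm_le c p'; linarith) hdist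
    have h3 : (1 / 2) * (‖c‖ ^ 2 - ‖p'‖ ^ 2) ≤ μ * δ := by
      nlinarith [hnorm_le c hc, hnorm_le p' hp', norm_nonneg c, norm_nonneg p',
        mul_nonneg hδ0 (add_nonneg (norm_nonneg c) (norm_nonneg p')),
        mul_nonneg (sub_nonneg.mpr hcp) (add_nonneg (norm_nonneg c) (norm_nonneg p'))]
    have h4 : lam * ⟪p', x⟫ ≤ lam * (⟪c, x⟫ + ε) := by nlinarith
    rcases hlam0.lt_or_eq with hpos | hzero
    · exact le_of_mul_le_mul_left h4 hpos
    · -- lam = 0, so K = δ = 0 and C is a single point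
      have h0 : K + (1 / 2) * δ ^ 2 + μ * δ ≤ 0 := by
        rw [← hzero] at hlamε; linarith
      have hδsq : δ ^ 2 ≤ 0 := by
        have h1 := mul_nonneg hμ0 hδ0
        linarith
      have hδz : δ = 0 := by
        have h2 : δ * δ ≤ 0 := by rw [← sq]; exact hδsq
        rcases hδ0.lt_or_eq with h3 | h3
        · exact absurd h2 (not_le.mpr (mul_pos h3 h3))
        · exact h3.symm
      have hz : ‖c - p'‖ = 0 := le_antisymm (hδz ▸ hdist) (norm_nonneg _)
      have hcp' : c = p' := by
        have : c - p' = 0 := norm_eq_zero.mp hz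
        linear_combination (norm := module) this
      rw [hcp']; linarith
  have hlb : ⟪p', x⟫ - ε ≤ sInf ((fun c => ⟪c, x⟫) '' C) := by
    refine le_csInf (hCne.image _) ?_
    rintro y ⟨c, hc, rfl⟩
    have := key c hc; simp only; linarith
  linarith
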